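/- Let M be a finite Markov chain, ψ a set of states, and p ∈ [0,1]. If C ⊆ FReach(M, s₀, ψ) is a representative counterexample (μ_M(⋃_{σ ∈ C} Cyl(σ)) > p), then Cyl(C) = ⋃_{σ ∈ C} Cyl(σ) is a counterexample to P_{≤p}(◇ψ): it is a measurable subset of { ω | ∃i. ωᵢ ∈ ψ } with probability exceeding p. Conversely, if there exists any measurable counterexample to P_{≤p}(◇ψ), then there exists a representative counterexample (a set of finite paths in FReach with cylinder probability exceeding p). -/

import Mathlib

open scoped ENNReal Classical
open MeasureTheory

namespace CE

variable {S : Type}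

/-- Positive-probability transition (edge of the underlying digraph). -/
def edge (P : S → S → ℝ≥0∞) (s t : S) : Prop := 0 < P s t

/-- Finite path of the Markov chain with transition function `P`, starting at `s`. -/
def IsFPath (P : S → S → ℝ≥0∞) (s : S) (σ : List S) : Prop :=
  σ.head? = some s ∧ σ.Chain' (edge P)

/-- Infinite path of the Markov chain with transition function `P`, starting at `s`. -/
def IsPath (P : S → S → ℝ≥0∞) (s : S) (ω : ℕ → S) : Prop :=
  ω 0 = s ∧ ∀ n, edge P (ω n) (ω (n + 1))

/-- Reachability in the underlying digraph. -/
def Reach (P : S → S → ℝ≥0∞) : S → S → Prop :=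
  Relation.ReflTransGen (edge P)

/-- Same strongly connected component. -/
def sccRel (P : S → S → ℝ≥0∞) (s t : S) : Prop :=
  Reach P s t ∧ Reach P t s

/-- `s` belongs to a nontrivial SCC (more than one state, or a self-loop). -/
def nontriv (P : S → S → ℝ≥0∞) (s : S) : Prop :=
  (∃ t, t ≠ s ∧ sccRel P s t) ∨ edge P s s

/-- Cylinder (cone) of a finite path. -/
def Cyl (ρ : List S) : Set (ℕ → S) := {ω | ∀ i : Fin ρ.length, ω i.1 = ρ.get i}

/-- Finite paths from `s` reaching `A` exactly at their last state. -/
def FReach (P : S → S → ℝ≥0∞) (s : S) (A : Set S) : Set (List S) :=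
  {σ | IsFPath P s σ ∧ (∃ h : σ ≠ [], σ.getLast h ∈ A) ∧ ∀ x ∈ σ.dropLast, x ∉ A}

/-- Infinite sequences that eventually visit `A`. -/
def ReachSet (A : Set S) : Set (ℕ → S) := {ω | ∃ i, ω i ∈ A}

/-- Product of transition probabilities along a finite path. -/
noncomputable def cylProb (P : S → S → ℝ≥0∞) (d : S) (ρ : List S) : ℝ≥0∞ :=
  ∏ i ∈ Finset.range (ρ.length - 1), P (ρ.getD i d) (ρ.getD (i + 1) d)

/-- `σ ⪯_f ω`: subsequence embedding satisfying freshness and inertia w.r.t. `r`. -/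
structure Embeds (r : S → S → Prop) (σ : List S) (ω : ℕ → S) (f : ℕ → ℕ) : Prop where
  mono : ∀ i j, i < j → j < σ.length → f i < f j
  agree : ∀ i : Fin σ.length, σ.get i = ω (f i.1)
  fresh : ∀ i < σ.length, ∀ j < f i, ¬ r (ω (f i)) (ω j)
  inertia : ∀ i, i + 1 < σ.length → ∀ j, f i < j → j < f (i + 1) → r (ω (f i)) (ω j)

/-- There is a path from `s` to `t` staying in the SCC of `s` until `t`. -/
def exitReach (P : S → S → ℝ≥0∞) (s t : S) : Prop :=
  ∃ l : List S, List.Chain (edge P) s (l ++ [t]) ∧ ∀ u ∈ s :: l, sccRel P s u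

/-- The SCC of `s` has no output states. -/
def noOut (P : S → S → ℝ≥0∞) (s : S) : Prop :=
  ∀ u t, sccRel P s u → edge P u t → sccRel P s t

/-- Edges of the acyclic reduction. -/
def AcEdge (P : S → S → ℝ≥0∞) (s t : S) : Prop :=
  (¬ nontriv P s ∧ edge P s t) ∨
  (nontriv P s ∧ ¬ sccRel P s t ∧ exitReach P s t) ∨
  (nontriv P s ∧ t = s ∧ noOut P s)

/-- States of the acyclic reduction: states outside nontrivial SCCs and input states. -/
def AcState (P : S → S → ℝ≥0∞) (s : S) : Prop :=
  ¬ nontriv P s ∨ ∃ t, ¬ sccRel P s t ∧ edge P t s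

/-- A rail: a finite path of the acyclic reduction starting at `s0`. -/
def IsRail (P : S → S → ℝ≥0∞) (s0 : S) (σ : List S) : Prop :=
  σ.head? = some s0 ∧ σ.Chain' (AcEdge P) ∧ ∀ x ∈ σ, AcState P x

/-- The torrent of a rail `σ`: infinite paths into which `σ` embeds. -/
def Torr (P : S → S → ℝ≥0∞) (r : S → S → Prop) (s0 : S) (σ : List S) : Set (ℕ → S) :=
  {ω | IsPath P s0 ω ∧ ∃ f, Embeds r σ ω f}

def toSeq (d : S) (ρ : List S) : ℕ → S := fun n => ρ.getD n d

/-- Torrent generators: finite paths `ρ` with an embedding of `σ` ending at the last state. -/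
def Gen (P : S → S → ℝ≥0∞) (r : S → S → Prop) (s0 : S) (σ : List S) : Set (List S) :=
  {ρ | IsFPath P s0 ρ ∧ ρ ≠ [] ∧ ∃ f, Embeds r σ (toSeq s0 ρ) f ∧
    (∀ i < σ.length, f i < ρ.length) ∧ f (σ.length - 1) = ρ.length - 1}

/-- Finite paths from `t` to `s` staying in the SCC of `t` except the final state `s`. -/
def ExitPaths (P : S → S → ℝ≥0∞) (t s : S) : Set (List S) :=
  {π | π.head? = some t ∧ (∃ h : π ≠ [], π.getLast h = s) ∧ π.Chain' (edge P) ∧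
    ∀ u ∈ π.dropLast, sccRel P t u}

/-- `M_ψ`: make absorbing all states of `A` and all states not reaching `A`. -/
noncomputable def absP (P : S → S → ℝ≥0∞) (A : Set S) : S → S → ℝ≥0∞ := fun s t =>
  if s ∈ A ∨ ¬ ∃ a ∈ A, Reach P s a then (if t = s then 1 else 0) else P s t

/-- Absorbing state. -/
def Absorbing (P : S → S → ℝ≥0∞) (s : S) : Prop :=
  P s s = 1 ∧ ∀ t, t ≠ s → P s t = 0

/-- Output states of the SCC of `k`. -/
def OutK (P : S → S → ℝ≥0∞) (k : S) : Set S :=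
  {t | ¬ sccRel P k t ∧ ∃ u, sccRel P k u ∧ edge P u t}

/-- The chain `M_K` of the SCC of `k`, with the output states made absorbing. -/
noncomputable def PK (P : S → S → ℝ≥0∞) (k : S) : S → S → ℝ≥0∞ := fun s t =>
  if sccRel P k s then P s t else (if t = s then 1 else 0)

/-- Absorbing state of the acyclic reduction: its only edge is a self-loop. -/
def AcAbsorbing (P : S → S → ℝ≥0∞) (s : S) : Prop :=
  AcEdge P s s ∧ ∀ t, AcEdge P s t → t = s



lemma cyl_measurable [MeasurableSpace S] [MeasurableSingletonClass S] (ρ : List S) :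
    MeasurableSet (Cyl ρ) := by
  have : Cyl ρ = ⋂ i : Fin ρ.length, (fun ω : ℕ → S => ω i.1) ⁻¹' {ρ.get i} := by
    ext ω; simp [Cyl, Set.mem_iInter]
  rw [this]
  exact MeasurableSet.iInter fun i => (measurable_pi_apply i.1) (measurableSet_singleton _)

lemma eq_of_mem_cyl_aux {P : S → S → ℝ≥0∞} {s0 : S} {A : Set S} {ρ σ : List S} {ω : ℕ → S}
    (hρ : ρ ∈ FReach P s0 A) (hσ : σ ∈ FReach P s0 A)
    (h1 : ω ∈ Cyl ρ) (h2 : ω ∈ Cyl σ) (hle : ρ.length ≤ σ.length) : ρ = σ := by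
  have hget : ∀ i (hi : i < ρ.length), ρ.get ⟨i, hi⟩ = σ.get ⟨i, lt_of_lt_of_le hi hle⟩ := by
    intro i hi
    exact (h1 ⟨i, hi⟩).symm.trans (h2 ⟨i, lt_of_lt_of_le hi hle⟩)
  rcases lt_or_eq_of_le hle with hlt | heq
  · exfalso
    obtain ⟨hne, hA⟩ := hρ.2.1
    have hρpos : 0 < ρ.length := List.length_pos_iff.mpr hne
    have hk : ρ.length - 1 < ρ.length := by omega
    have hk' : ρ.length - 1 < σ.length - 1 := by omega
    have hk'' : ρ.length - 1 < σ.dropLast.length := by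
      rw [List.length_dropLast]; exact hk'
    have hlast : ρ.getLast hne = ρ.get ⟨ρ.length - 1, hk⟩ := List.getLast_eq_getElem hne
    have hmem : σ.get ⟨ρ.length - 1, lt_of_lt_of_le hk hle⟩ ∈ σ.dropLast := by
      have := List.getElem_dropLast hk''
      rw [List.get_eq_getElem, ← this]
      exact List.getElem_mem _
    apply hσ.2.2 _ hmem
    rw [← hget _ hk, ← hlast]
    exact hA
  · exact List.ext_get heq fun i h1' h2' => hget i h1'

lemma disjoint_cyl {P : S → S → ℝ≥0∞} {s0 : S} {A : Set S} {ρ σ : List S}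
    (hρ : ρ ∈ FReach P s0 A) (hσ : σ ∈ FReach P s0 A) (hne : ρ ≠ σ) :
    Disjoint (Cyl ρ) (Cyl σ) := by
  rw [Set.disjoint_left]
  intro ω h1 h2
  rcases le_total ρ.length σ.length with h | h
  · exact hne (eq_of_mem_cyl_aux hρ hσ h1 h2 h)
  · exact hne (eq_of_mem_cyl_aux hσ hρ h2 h1 h).symm

lemma cylProb_pos {P : S → S → ℝ≥0∞} {s0 : S} {ρ : List S} (h : IsFPath P s0 ρ) :
    0 < cylProb P s0 ρ := by
  apply CanonicallyOrderedAdd.prod_pos.mpr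
  intro i hi
  rw [Finset.mem_range] at hi
  have h1 : i < ρ.length := by omega
  have h2 : i + 1 < ρ.length := by omega
  rw [List.getD_eq_getElem _ _ h1, List.getD_eq_getElem _ _ h2]
  have := List.isChain_iff_getElem.mp h.2 i (by omega)
  simpa [List.get_eq_getElem, edge] using this

lemma exists_prefix {P : S → S → ℝ≥0∞} {s0 : S} {A : Set S} {ω : ℕ → S}
    (hpath : IsPath P s0 ω) (hreach : ω ∈ ReachSet A) :
    ∃ ρ ∈ FReach P s0 A, ω ∈ Cyl ρ := by
  have hex : ∃ i, ω i ∈ A := hreach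
  classical
  set n := Nat.find hex with hn
  have hnA : ω n ∈ A := Nat.find_spec hex
  have hmin : ∀ j < n, ω j ∉ A := fun j hj => Nat.find_min hex hj
  refine ⟨List.ofFn (fun j : Fin (n + 1) => ω j.1), ⟨⟨?_, ?_⟩, ?_, ?_⟩, ?_⟩
  · rw [List.head?_eq_getElem?]
    have hlen : 0 < (List.ofFn (fun j : Fin (n + 1) => ω j.1)).length := by
      simp [List.length_ofFn]
    rw [List.getElem?_eq_getElem hlen]
    simp [List.getElem_ofFn, hpath.1]
  · refine List.isChain_iff_getElem.mpr ?_
    intro i hi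
    simp only [List.length_ofFn] at hi
    simp only [List.getElem_ofFn]
    exact hpath.2 i
  · have hne : List.ofFn (fun j : Fin (n + 1) => ω j.1) ≠ [] := by
      simp [← List.length_pos_iff, List.length_ofFn]
    refine ⟨hne, ?_⟩
    rw [List.getLast_eq_getElem hne]
    simp only [List.get_ofFn, List.getElem_ofFn, List.length_ofFn]
    simpa using hnA
  · intro x hx
    rw [List.mem_iff_getElem] at hx
    obtain ⟨j, hj, hxj⟩ := hx
    have hj' : j < n := by
      simpa [List.length_dropLast, List.length_ofFn] using hj
    rw [List.getElem_dropLast] at hxj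
    rw [List.getElem_ofFn] at hxj
    rw [← hxj]
    exact hmin j hj'
  · intro i
    simp only [List.get_ofFn]
    rfl

/-- a representative counterexample gives a counterexample (a measurable
set of paths reaching `ψ` of probability `> p`), and conversely the existence of a
counterexample gives a representative one. -/
theorem representative_iff_counterexample [MeasurableSpace S] [MeasurableSingletonClass S]
    (P : S → S → ℝ≥0∞) (s0 : S) (A : Set S) (p : ℝ≥0∞)
    (μ : Measure (ℕ → S)) [IsProbabilityMeasure μ]
    (hμ : ∀ ρ, IsFPath P s0 ρ → μ (Cyl ρ) = cylProb P s0 ρ)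
    (hsupp : μ {ω | ¬ IsPath P s0 ω} = 0) :
    (∀ C ⊆ FReach P s0 A, p < μ (⋃ ρ ∈ C, Cyl ρ) →
      (⋃ ρ ∈ C, Cyl ρ) ⊆ ReachSet A ∧ MeasurableSet (⋃ ρ ∈ C, Cyl ρ) ∧
        p < μ (⋃ ρ ∈ C, Cyl ρ)) ∧
    ((∃ C : Set (ℕ → S), MeasurableSet C ∧ C ⊆ ReachSet A ∧ p < μ C) →
      ∃ C' ⊆ FReach P s0 A, p < μ (⋃ ρ ∈ C', Cyl ρ)) := by
  constructor
  · intro C hC hp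
    refine ⟨?_, ?_, hp⟩
    · intro ω hω
      rw [Set.mem_iUnion₂] at hω
      obtain ⟨ρ, hρC, hωρ⟩ := hω
      obtain ⟨hfp, ⟨hne, hA⟩, hdl⟩ := hC hρC
      have hρpos : 0 < ρ.length := List.length_pos_iff.mpr hne
      have hk : ρ.length - 1 < ρ.length := by omega
      refine ⟨ρ.length - 1, ?_⟩
      have := hωρ ⟨ρ.length - 1, hk⟩
      rw [this, List.get_eq_getElem, ← List.getLast_eq_getElem hne]
      exact hA
    · -- C is countable since cylinders are disjoint with positive measure
      have hdisj : Pairwise (Function.onFun Disjoint fun ρ : ↥C => Cyl ρ.1) := by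
        intro ρ σ hne
        exact disjoint_cyl (hC ρ.2) (hC σ.2) (fun h => hne (Subtype.ext h))
      have hmble : ∀ ρ : ↥C, MeasurableSet (Cyl ρ.1) := fun ρ => cyl_measurable _
      have hcnt := Measure.countable_meas_pos_of_disjoint_iUnion (μ := μ) hmble hdisj
      have hall : {ρ : ↥C | 0 < μ (Cyl ρ.1)} = Set.univ := by
        ext ρ
        simp only [Set.mem_setOf_eq, Set.mem_univ, iff_true]
        rw [hμ _ (hC ρ.2).1]
        exact cylProb_pos (hC ρ.2).1
      rw [hall] at hcnt
      have hCcnt : C.Countable := by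
        have : Countable ↥C := Set.countable_univ_iff.mp hcnt
        exact Set.countable_coe_iff.mp this
      exact MeasurableSet.biUnion hCcnt fun ρ _ => cyl_measurable ρ
  · rintro ⟨C, hCm, hCsub, hCp⟩
    refine ⟨FReach P s0 A, le_refl _, ?_⟩
    have hsub : C ⊆ (⋃ ρ ∈ FReach P s0 A, Cyl ρ) ∪ {ω | ¬ IsPath P s0 ω} := by
      intro ω hω
      by_cases hpath : IsPath P s0 ω
      · left
        obtain ⟨ρ, hρ, hωρ⟩ := exists_prefix hpath (hCsub hω)
        exact Set.mem_biUnion hρ hωρ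
      · right; exact hpath
    calc p < μ C := hCp
      _ ≤ μ ((⋃ ρ ∈ FReach P s0 A, Cyl ρ) ∪ {ω | ¬ IsPath P s0 ω}) := measure_mono hsub
      _ ≤ μ (⋃ ρ ∈ FReach P s0 A, Cyl ρ) + μ {ω | ¬ IsPath P s0 ω} := measure_union_le _ _
      _ = μ (⋃ ρ ∈ FReach P s0 A, Cyl ρ) := by rw [hsupp, add_zero]

end CE
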